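/- Let G → G₁ and G → G₂ be pseudo-z-embeddings of connected reductive groups over a p-adic field F. Define G₃ as the pushout G₁ ×_{Z(G)} Z(G₂), i.e. (G₁ × Z(G₂))/{(z, z^{-1}) : z ∈ Z(G)}. Then the map G₁ → G₃, g ↦ (g, 1), is injective with cokernel G₂/G and is a pseudo-z-embedding; likewise, the map G₂ → G₃ sending g₂ = g·z₂ (with g ∈ G, z₂ ∈ Z(G₂)) to (g, z₂) is a well-defined injective homomorphism with cokernel G₁/G and is a pseudo-z-embedding. -/

import Mathlib

/-- A model, at the level of `F̄`-points with Galois action, of a pseudo-z-embedding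
`G → G_z` of connected reductive groups over a `p`-adic field: `G` contains the derived
group of `G_z`, the quotient `C = G_z/G` is a torus with `H¹(Γ, C) = 1`, and the natural
map `H¹(Γ, Z(G)) → H¹(Γ, Z(G_z))` is bijective. -/
structure PseudoZEmb (Γ : Type) [Group Γ] (G Gz : Type) [Group G] [Group Gz]
    [MulDistribMulAction Γ G] [MulDistribMulAction Γ Gz] : Type 1 where
  /-- the cokernel torus `C = G_z/G` -/
  C : Type
  [commC : CommGroup C]
  [actC : MulDistribMulAction Γ C]
  ι : G →* Gz
  π : Gz →* C
  ι_inj : Function.Injective ι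
  π_surj : Function.Surjective π
  ker_eq : ∀ x : Gz, π x = 1 ↔ ∃ g : G, ι g = x
  ι_equiv : ∀ (σ : Γ) (g : G), ι (σ • g) = σ • ι g
  π_equiv : ∀ (σ : Γ) (x : Gz), π (σ • x) = σ • π x
  /-- `H¹(Γ, C) = 1` -/
  h1C : ∀ c : Γ → C, (∀ σ τ : Γ, c (σ * τ) = c σ * σ • c τ) →
    ∃ x : C, ∀ σ : Γ, c σ = x⁻¹ * σ • x
  /-- `Z(G)` maps into `Z(G_z)` -/
  center_map : ∀ g : G, g ∈ Subgroup.center G → ι g ∈ Subgroup.center Gz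
  /-- injectivity of `H¹(Γ, Z(G)) → H¹(Γ, Z(G_z))` -/
  h1Z_inj : ∀ c c' : Γ → G,
    (∀ σ : Γ, c σ ∈ Subgroup.center G) → (∀ σ : Γ, c' σ ∈ Subgroup.center G) →
    (∀ σ τ : Γ, c (σ * τ) = c σ * σ • c τ) →
    (∀ σ τ : Γ, c' (σ * τ) = c' σ * σ • c' τ) →
    (∃ x ∈ Subgroup.center Gz, ∀ σ : Γ, ι (c' σ) = ι (c σ) * (x⁻¹ * σ • x)) →
    ∃ z ∈ Subgroup.center G, ∀ σ : Γ, c' σ = c σ * (z⁻¹ * σ • z)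
  /-- surjectivity of `H¹(Γ, Z(G)) → H¹(Γ, Z(G_z))` -/
  h1Z_surj : ∀ d : Γ → Gz, (∀ σ : Γ, d σ ∈ Subgroup.center Gz) →
    (∀ σ τ : Γ, d (σ * τ) = d σ * σ • d τ) →
    ∃ c : Γ → G, (∀ σ : Γ, c σ ∈ Subgroup.center G) ∧
      (∀ σ τ : Γ, c (σ * τ) = c σ * σ • c τ) ∧
      ∃ x ∈ Subgroup.center Gz, ∀ σ : Γ, d σ = ι (c σ) * (x⁻¹ * σ • x)

attribute [instance] PseudoZEmb.commC PseudoZEmb.actC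

/-- The action of `Γ` by automorphisms preserves the center. -/
lemma smul_center_mem {Γ G : Type} [Group Γ] [Group G] [MulDistribMulAction Γ G]
    (σ : Γ) {z : G} (hz : z ∈ Subgroup.center G) : σ • z ∈ Subgroup.center G := by
  rw [Subgroup.mem_center_iff] at hz ⊢
  intro g
  have h1 : g * σ • z = σ • (σ⁻¹ • g * z) := by
    rw [smul_mul', smul_inv_smul]
  have h2 : σ • z * g = σ • (z * σ⁻¹ • g) := by
    rw [smul_mul', smul_inv_smul]
  rw [h1, hz (σ⁻¹ • g), ← h2]

namespace PZAux

variable {Γ H K : Type} [Group Γ] [Group H] [Group K]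
  [MulDistribMulAction Γ H] [MulDistribMulAction Γ K]

def IsCocycle (c : Γ → H) : Prop := ∀ σ τ : Γ, c (σ * τ) = c σ * σ • c τ

lemma isCocycle_coboundary (x : H) : IsCocycle (fun σ : Γ => x⁻¹ * σ • x) := by
  intro σ τ
  simp [mul_smul, smul_mul', smul_inv', mul_assoc]

lemma IsCocycle.mul {c c' : Γ → H} (h : IsCocycle c) (h' : IsCocycle c')
    (hc' : ∀ σ, c' σ ∈ Subgroup.center H) :
    IsCocycle (fun σ => c σ * c' σ) := by
  intro σ τ
  have hcomm : ∀ (a : H) (σ : Γ), a * c' σ = c' σ * a := fun a σ =>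
    Subgroup.mem_center_iff.mp (hc' σ) a
  show c (σ * τ) * c' (σ * τ) = c σ * c' σ * σ • (c τ * c' τ)
  calc c (σ * τ) * c' (σ * τ) = c σ * σ • c τ * (c' σ * σ • c' τ) := by rw [h, h']
    _ = c σ * (σ • c τ * c' σ) * σ • c' τ := by simp [mul_assoc]
    _ = c σ * (c' σ * σ • c τ) * σ • c' τ := by rw [hcomm]
    _ = c σ * c' σ * σ • (c τ * c' τ) := by simp [smul_mul', mul_assoc]

lemma IsCocycle.inv {c : Γ → H} (h : IsCocycle c)
    (hc : ∀ σ, c σ ∈ Subgroup.center H) :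
    IsCocycle (fun σ => (c σ)⁻¹) := by
  intro σ τ
  show (c (σ * τ))⁻¹ = (c σ)⁻¹ * σ • (c τ)⁻¹
  have : (c σ * σ • c τ)⁻¹ = (c σ)⁻¹ * σ • (c τ)⁻¹ := by
    rw [mul_inv_rev, smul_inv']
    exact Subgroup.mem_center_iff.mp (Subgroup.inv_mem _ (hc σ)) _
  rw [h, this]

lemma IsCocycle.map {c : Γ → H} (h : IsCocycle c) (f : H →* K)
    (hf : ∀ (σ : Γ) (x : H), f (σ • x) = σ • f x) :
    IsCocycle (fun σ => f (c σ)) := by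
  intro σ τ
  show f (c (σ * τ)) = f (c σ) * σ • f (c τ)
  rw [h, f.map_mul, hf]

lemma IsCocycle.comap {c : Γ → H} (f : H →* K) (hinj : Function.Injective f)
    (hf : ∀ (σ : Γ) (x : H), f (σ • x) = σ • f x)
    (h : IsCocycle (fun σ => f (c σ))) : IsCocycle c := by
  intro σ τ
  apply hinj
  rw [f.map_mul, hf]
  exact h σ τ

/-- coboundary of a product, first factor central -/
lemma coboundary_mul (a b : H) (ha : a ∈ Subgroup.center H) (σ : Γ) :
    (a * b)⁻¹ * σ • (a * b) = (a⁻¹ * σ • a) * (b⁻¹ * σ • b) := by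
  have h1 : b⁻¹ * (a⁻¹ * σ • a) = (a⁻¹ * σ • a) * b⁻¹ :=
    Subgroup.mem_center_iff.mp
      (Subgroup.mul_mem _ (Subgroup.inv_mem _ ha) (smul_center_mem σ ha)) b⁻¹
  calc (a * b)⁻¹ * σ • (a * b) = b⁻¹ * (a⁻¹ * σ • a) * σ • b := by
        simp [mul_inv_rev, smul_mul', mul_assoc]
    _ = (a⁻¹ * σ • a) * (b⁻¹ * σ • b) := by rw [h1]; simp [mul_assoc]

end PZAux

section Push

open PZAux

variable {Γ G G₁ G₂ G₃ : Type} [Group Γ] [Group G] [Group G₁] [Group G₂] [Group G₃]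
    [MulDistribMulAction Γ G] [MulDistribMulAction Γ G₁] [MulDistribMulAction Γ G₂]
    [MulDistribMulAction Γ G₃]
    (P₁ : PseudoZEmb Γ G G₁) (P₂ : PseudoZEmb Γ G G₂)
    (j₁ : G₁ →* G₃) (j₂ : ↥(Subgroup.center G₂) →* G₃)

/-- `j₂` lands in the center of `G₃`. -/
lemma j₂_central
    (hcomm : ∀ (g : G₁) (z : ↥(Subgroup.center G₂)), j₁ g * j₂ z = j₂ z * j₁ g)
    (hsurj : ∀ x : G₃, ∃ (g : G₁) (z : ↥(Subgroup.center G₂)), x = j₁ g * j₂ z)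
    (z : ↥(Subgroup.center G₂)) : j₂ z ∈ Subgroup.center G₃ := by
  rw [Subgroup.mem_center_iff]
  intro x
  obtain ⟨g, w, rfl⟩ := hsurj x
  calc j₁ g * j₂ w * j₂ z = j₁ g * j₂ (w * z) := by rw [mul_assoc, ← j₂.map_mul]
    _ = j₁ g * (j₂ z * j₂ w) := by rw [(show w * z = z * w from Subtype.ext (Subgroup.mem_center_iff.mp z.2 (w : G₂))), j₂.map_mul]
    _ = j₂ z * (j₁ g * j₂ w) := by rw [← mul_assoc, hcomm, mul_assoc]

lemma j₁_inj
    (hker : ∀ (g : G₁) (z : ↥(Subgroup.center G₂)),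
      j₁ g * j₂ z = 1 ↔
        ∃ w : G, w ∈ Subgroup.center G ∧ P₁.ι w = g ∧ P₂.ι w = (↑z)⁻¹) :
    Function.Injective j₁ := by
  rw [injective_iff_map_eq_one]
  intro g hg
  have h1 : j₁ g * j₂ 1 = 1 := by rw [j₂.map_one, mul_one, hg]
  obtain ⟨w, -, hw1, hw2⟩ := (hker g 1).mp h1
  have : w = 1 := P₂.ι_inj (by simpa using hw2)
  rw [this] at hw1
  simpa using hw1.symm

lemma center_of_ι₂ (w : G) (h : P₂.ι w ∈ Subgroup.center G₂) :
    w ∈ Subgroup.center G := by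
  rw [Subgroup.mem_center_iff] at h ⊢
  intro g
  apply P₂.ι_inj
  rw [P₂.ι.map_mul, P₂.ι.map_mul, h]

/-- on the antidiagonal `Z(G)`, `j₁ ∘ ι₁` and `j₂ ∘ ι₂` agree -/
lemma j₁_ι₁_eq_j₂_ι₂
    (hker : ∀ (g : G₁) (z : ↥(Subgroup.center G₂)),
      j₁ g * j₂ z = 1 ↔
        ∃ w : G, w ∈ Subgroup.center G ∧ P₁.ι w = g ∧ P₂.ι w = (↑z)⁻¹)
    (w : G) (hw : w ∈ Subgroup.center G) (h2 : P₂.ι w ∈ Subgroup.center G₂) :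
    j₁ (P₁.ι w) = j₂ ⟨P₂.ι w, h2⟩ := by
  have h1 : j₁ (P₁.ι w) * j₂ (⟨P₂.ι w, h2⟩⁻¹) = 1 := by
    rw [hker]
    exact ⟨w, hw, rfl, by simp⟩
  rw [j₂.map_inv] at h1
  exact (mul_inv_eq_one.mp h1)

/-- comparison of two decompositions -/
lemma decomp_rel
    (hker : ∀ (g : G₁) (z : ↥(Subgroup.center G₂)),
      j₁ g * j₂ z = 1 ↔
        ∃ w : G, w ∈ Subgroup.center G ∧ P₁.ι w = g ∧ P₂.ι w = (↑z)⁻¹)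
    (g g' : G₁) (z z' : ↥(Subgroup.center G₂))
    (h : j₁ g * j₂ z = j₁ g' * j₂ z') :
    ∃ w : G, w ∈ Subgroup.center G ∧ g = g' * P₁.ι w ∧ (↑z' : G₂) = P₂.ι w * ↑z := by
  have h1 : j₁ (g'⁻¹ * g) * j₂ (z * z'⁻¹) = 1 := by
    rw [j₁.map_mul, j₂.map_mul, j₁.map_inv, j₂.map_inv]
    calc (j₁ g')⁻¹ * j₁ g * (j₂ z * (j₂ z')⁻¹)
        = (j₁ g')⁻¹ * (j₁ g * j₂ z) * (j₂ z')⁻¹ := by simp [mul_assoc]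
      _ = (j₁ g')⁻¹ * (j₁ g' * j₂ z') * (j₂ z')⁻¹ := by rw [h]
      _ = 1 := by simp [mul_assoc]
  obtain ⟨w, hw, hw1, hw2⟩ := (hker _ _).mp h1
  refine ⟨w, hw, by rw [hw1, mul_inv_cancel_left], ?_⟩
  have : (↑(z * z'⁻¹) : G₂) = ↑z * (↑z')⁻¹ := rfl
  rw [this, mul_inv_rev, inv_inv] at hw2
  rw [hw2]
  simp [mul_assoc]

/-- `j₁` maps the center into the center -/
lemma j₁_center
    (hcomm : ∀ (g : G₁) (z : ↥(Subgroup.center G₂)), j₁ g * j₂ z = j₂ z * j₁ g)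
    (hsurj : ∀ x : G₃, ∃ (g : G₁) (z : ↥(Subgroup.center G₂)), x = j₁ g * j₂ z)
    (g : G₁) (hg : g ∈ Subgroup.center G₁) : j₁ g ∈ Subgroup.center G₃ := by
  rw [Subgroup.mem_center_iff]
  intro x
  obtain ⟨g', z, rfl⟩ := hsurj x
  have h1 : j₁ g' * j₁ g = j₁ g * j₁ g' := by
    rw [← j₁.map_mul, ← j₁.map_mul, Subgroup.mem_center_iff.mp hg]
  calc j₁ g' * j₂ z * j₁ g = j₁ g' * j₁ g * j₂ z := by rw [mul_assoc, ← hcomm, mul_assoc]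
    _ = j₁ g * (j₁ g' * j₂ z) := by rw [h1, mul_assoc]

/-- `j₁` reflects centrality -/
lemma j₁_center_reflect
    (hinj : Function.Injective j₁)
    (g : G₁) (hg : j₁ g ∈ Subgroup.center G₃) : g ∈ Subgroup.center G₁ := by
  rw [Subgroup.mem_center_iff]
  intro g'
  apply hinj
  rw [j₁.map_mul, j₁.map_mul, Subgroup.mem_center_iff.mp hg]

lemma smul_decomp
    (hj₁_equiv : ∀ (σ : Γ) (g : G₁), j₁ (σ • g) = σ • j₁ g)
    (hj₂_equiv : ∀ (σ : Γ) (z : ↥(Subgroup.center G₂)),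
      j₂ ⟨σ • (z : G₂), smul_center_mem σ z.2⟩ = σ • j₂ z)
    (σ : Γ) (g : G₁) (z : ↥(Subgroup.center G₂)) :
    σ • (j₁ g * j₂ z) = j₁ (σ • g) * j₂ ⟨σ • (z : G₂), smul_center_mem σ z.2⟩ := by
  rw [smul_mul', hj₁_equiv, hj₂_equiv]

lemma cobound_decomp
    (hcomm : ∀ (g : G₁) (z : ↥(Subgroup.center G₂)), j₁ g * j₂ z = j₂ z * j₁ g)
    (hsurj : ∀ x : G₃, ∃ (g : G₁) (z : ↥(Subgroup.center G₂)), x = j₁ g * j₂ z)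
    (hj₁_equiv : ∀ (σ : Γ) (g : G₁), j₁ (σ • g) = σ • j₁ g)
    (hj₂_equiv : ∀ (σ : Γ) (z : ↥(Subgroup.center G₂)),
      j₂ ⟨σ • (z : G₂), smul_center_mem σ z.2⟩ = σ • j₂ z)
    (σ : Γ) (g : G₁) (z : ↥(Subgroup.center G₂)) :
    (j₁ g * j₂ z)⁻¹ * σ • (j₁ g * j₂ z) =
      j₁ (g⁻¹ * σ • g) * j₂ (z⁻¹ * ⟨σ • (z : G₂), smul_center_mem σ z.2⟩) := by
  rw [smul_decomp j₁ j₂ hj₁_equiv hj₂_equiv, j₁.map_mul, j₂.map_mul, j₁.map_inv, j₂.map_inv]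
  have h1 : (j₂ z)⁻¹ * ((j₁ g)⁻¹ * j₁ (σ • g)) = ((j₁ g)⁻¹ * j₁ (σ • g)) * (j₂ z)⁻¹ := by
    have := Subgroup.mem_center_iff.mp
      (Subgroup.inv_mem _ (j₂_central j₁ j₂ hcomm hsurj z)) ((j₁ g)⁻¹ * j₁ (σ • g))
    rw [this]
  calc (j₁ g * j₂ z)⁻¹ * (j₁ (σ • g) * j₂ ⟨σ • (z : G₂), smul_center_mem σ z.2⟩)
      = (j₂ z)⁻¹ * ((j₁ g)⁻¹ * j₁ (σ • g)) * j₂ ⟨σ • (z : G₂), smul_center_mem σ z.2⟩ := by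
        simp [mul_inv_rev, mul_assoc]
    _ = (j₁ g)⁻¹ * j₁ (σ • g) * ((j₂ z)⁻¹ * j₂ ⟨σ • (z : G₂), smul_center_mem σ z.2⟩) := by
        rw [h1]; simp [mul_assoc]

/-- an element of the center of `G₃` can be decomposed with central first component -/
lemma center_decomp
    (hinj : Function.Injective j₁)
    (hcomm : ∀ (g : G₁) (z : ↥(Subgroup.center G₂)), j₁ g * j₂ z = j₂ z * j₁ g)
    (hsurj : ∀ x : G₃, ∃ (g : G₁) (z : ↥(Subgroup.center G₂)), x = j₁ g * j₂ z)
    (x : G₃) (hx : x ∈ Subgroup.center G₃) :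
    ∃ a : G₁, a ∈ Subgroup.center G₁ ∧ ∃ b : ↥(Subgroup.center G₂), x = j₁ a * j₂ b := by
  obtain ⟨a, b, rfl⟩ := hsurj x
  refine ⟨a, ?_, b, rfl⟩
  apply j₁_center_reflect j₁ hinj
  have : j₁ a = (j₁ a * j₂ b) * (j₂ b)⁻¹ := by simp [mul_assoc]
  rw [this]
  exact Subgroup.mul_mem _ hx (Subgroup.inv_mem _ (j₂_central j₁ j₂ hcomm hsurj b))

/-- universal property: homomorphisms out of `G₃` -/
lemma pushout_hom {A : Type} [CommGroup A]
    (hcomm : ∀ (g : G₁) (z : ↥(Subgroup.center G₂)), j₁ g * j₂ z = j₂ z * j₁ g)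
    (hsurj : ∀ x : G₃, ∃ (g : G₁) (z : ↥(Subgroup.center G₂)), x = j₁ g * j₂ z)
    (hker : ∀ (g : G₁) (z : ↥(Subgroup.center G₂)),
      j₁ g * j₂ z = 1 ↔
        ∃ w : G, w ∈ Subgroup.center G ∧ P₁.ι w = g ∧ P₂.ι w = (↑z)⁻¹)
    (f₁ : G₁ →* A) (f₂ : ↥(Subgroup.center G₂) →* A)
    (hf : ∀ (w : G) (hw : w ∈ Subgroup.center G) (h2 : P₂.ι w ∈ Subgroup.center G₂),
      f₁ (P₁.ι w) = f₂ ⟨P₂.ι w, h2⟩) :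
    ∃ q : G₃ →* A, ∀ (g : G₁) (z : ↥(Subgroup.center G₂)),
      q (j₁ g * j₂ z) = f₁ g * f₂ z := by
  have hwd : ∀ (g g' : G₁) (z z' : ↥(Subgroup.center G₂)),
      j₁ g * j₂ z = j₁ g' * j₂ z' → f₁ g * f₂ z = f₁ g' * f₂ z' := by
    intro g g' z z' h
    obtain ⟨w, hw, hg, hz⟩ := decomp_rel P₁ P₂ j₁ j₂ hker g g' z z' h
    have h2 : P₂.ι w ∈ Subgroup.center G₂ := by
      rw [hz] at *
      exact P₂.center_map w hw
    have hz' : z' = ⟨P₂.ι w, h2⟩ * z := by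
      apply Subtype.ext
      exact hz
    rw [hg, hz', f₁.map_mul, f₂.map_mul, hf w hw h2, mul_assoc]
  classical
  have hdec : ∀ x : G₃, ∃ p : G₁ × ↥(Subgroup.center G₂), x = j₁ p.1 * j₂ p.2 := by
    intro x
    obtain ⟨g, z, h⟩ := hsurj x
    exact ⟨(g, z), h⟩
  choose dec hdecspec using hdec
  set f : G₃ → A := fun x => f₁ (dec x).1 * f₂ (dec x).2 with hfdef
  have hfspec : ∀ (g : G₁) (z : ↥(Subgroup.center G₂)), f (j₁ g * j₂ z) = f₁ g * f₂ z := by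
    intro g z
    exact hwd _ g _ z (hdecspec (j₁ g * j₂ z)).symm
  refine ⟨MonoidHom.mk' f ?_, fun g z => hfspec g z⟩
  intro x y
  rw [hdecspec x, hdecspec y]
  have hxy : (j₁ (dec x).1 * j₂ (dec x).2) * (j₁ (dec y).1 * j₂ (dec y).2) =
      j₁ ((dec x).1 * (dec y).1) * j₂ ((dec x).2 * (dec y).2) := by
    rw [j₁.map_mul, j₂.map_mul]
    calc j₁ (dec x).1 * j₂ (dec x).2 * (j₁ (dec y).1 * j₂ (dec y).2)
        = j₁ (dec x).1 * (j₂ (dec x).2 * j₁ (dec y).1) * j₂ (dec y).2 := by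
          simp [mul_assoc]
      _ = j₁ (dec x).1 * (j₁ (dec y).1 * j₂ (dec x).2) * j₂ (dec y).2 := by
          rw [hcomm]
      _ = j₁ (dec x).1 * j₁ (dec y).1 * (j₂ (dec x).2 * j₂ (dec y).2) := by
          simp [mul_assoc]
  rw [hxy, hfspec, hfspec, hfspec, f₁.map_mul, f₂.map_mul]
  simp [mul_assoc, mul_comm, mul_left_comm]

/-- existence of `κ : G₂ → G₃` -/
lemma kappa_exists
    (hG₂gen : ∀ g₂ : G₂, ∃ (g : G) (z : ↥(Subgroup.center G₂)), g₂ = P₂.ι g * ↑z)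
    (hcomm : ∀ (g : G₁) (z : ↥(Subgroup.center G₂)), j₁ g * j₂ z = j₂ z * j₁ g)
    (hker : ∀ (g : G₁) (z : ↥(Subgroup.center G₂)),
      j₁ g * j₂ z = 1 ↔
        ∃ w : G, w ∈ Subgroup.center G ∧ P₁.ι w = g ∧ P₂.ι w = (↑z)⁻¹) :
    ∃ κ : G₂ →* G₃, ∀ (g : G) (z : ↥(Subgroup.center G₂)),
      κ (P₂.ι g * ↑z) = j₁ (P₁.ι g) * j₂ z := by
  have hwd : ∀ (g g' : G) (z z' : ↥(Subgroup.center G₂)),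
      P₂.ι g * ↑z = P₂.ι g' * ↑z' → j₁ (P₁.ι g) * j₂ z = j₁ (P₁.ι g') * j₂ z' := by
    intro g g' z z' h
    have hw2 : P₂.ι (g'⁻¹ * g) = ↑z' * (↑z : G₂)⁻¹ := by
      rw [P₂.ι.map_mul, P₂.ι.map_inv]
      rw [eq_comm, mul_inv_eq_iff_eq_mul, mul_assoc, ← inv_mul_eq_iff_eq_mul.mpr h.symm]
      simp [mul_assoc]
    have h2 : P₂.ι (g'⁻¹ * g) ∈ Subgroup.center G₂ := by
      rw [hw2]
      exact Subgroup.mul_mem _ z'.2 (Subgroup.inv_mem _ z.2)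
    have hwZ : g'⁻¹ * g ∈ Subgroup.center G := center_of_ι₂ P₂ _ h2
    have hz' : z' = ⟨P₂.ι (g'⁻¹ * g), h2⟩ * z := by
      apply Subtype.ext
      show (↑z' : G₂) = P₂.ι (g'⁻¹ * g) * ↑z
      rw [hw2]
      simp [mul_assoc]
    rw [hz', j₂.map_mul, ← j₁_ι₁_eq_j₂_ι₂ P₁ P₂ j₁ j₂ hker _ hwZ h2,
      ← mul_assoc, ← j₁.map_mul, ← P₁.ι.map_mul, mul_inv_cancel_left]
  classical
  have hdec : ∀ x : G₂, ∃ p : G × ↥(Subgroup.center G₂), x = P₂.ι p.1 * ↑p.2 := by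
    intro x
    obtain ⟨g, z, h⟩ := hG₂gen x
    exact ⟨(g, z), h⟩
  choose dec hdecspec using hdec
  set f : G₂ → G₃ := fun x => j₁ (P₁.ι (dec x).1) * j₂ (dec x).2 with hfdef
  have hfspec : ∀ (g : G) (z : ↥(Subgroup.center G₂)), f (P₂.ι g * ↑z) = j₁ (P₁.ι g) * j₂ z := by
    intro g z
    exact hwd _ g _ z (hdecspec (P₂.ι g * ↑z)).symm
  refine ⟨MonoidHom.mk' f ?_, fun g z => hfspec g z⟩
  intro x y
  rw [hdecspec x, hdecspec y]
  have hxy : (P₂.ι (dec x).1 * ↑(dec x).2) * (P₂.ι (dec y).1 * ↑(dec y).2) =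
      P₂.ι ((dec x).1 * (dec y).1) * ↑((dec x).2 * (dec y).2) := by
    rw [P₂.ι.map_mul]
    have : (↑(dec x).2 : G₂) * P₂.ι (dec y).1 = P₂.ι (dec y).1 * ↑(dec x).2 :=
      (Subgroup.mem_center_iff.mp (dec x).2.2 _).symm
    calc P₂.ι (dec x).1 * ↑(dec x).2 * (P₂.ι (dec y).1 * ↑(dec y).2)
        = P₂.ι (dec x).1 * (↑(dec x).2 * P₂.ι (dec y).1) * ↑(dec y).2 := by
          simp [mul_assoc]
      _ = P₂.ι (dec x).1 * (P₂.ι (dec y).1 * ↑(dec x).2) * ↑(dec y).2 := by rw [this]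
      _ = P₂.ι (dec x).1 * P₂.ι (dec y).1 * (↑((dec x).2 * (dec y).2) : G₂) := by
          simp [mul_assoc]
  rw [hxy, hfspec, hfspec, hfspec, P₁.ι.map_mul, j₁.map_mul, j₂.map_mul]
  calc j₁ (P₁.ι (dec x).1) * j₁ (P₁.ι (dec y).1) * (j₂ (dec x).2 * j₂ (dec y).2)
      = j₁ (P₁.ι (dec x).1) * (j₁ (P₁.ι (dec y).1) * j₂ (dec x).2) * j₂ (dec y).2 := by
        simp [mul_assoc]
    _ = j₁ (P₁.ι (dec x).1) * (j₂ (dec x).2 * j₁ (P₁.ι (dec y).1)) * j₂ (dec y).2 := by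
        rw [hcomm]
    _ = j₁ (P₁.ι (dec x).1) * j₂ (dec x).2 * (j₁ (P₁.ι (dec y).1) * j₂ (dec y).2) := by
        simp [mul_assoc]

end Push

open PZAux in
/-- Let `G → G₁` and `G → G₂` be pseudo-z-embeddings over a `p`-adic
field, and let `G₃ = G₁ ×_{Z(G)} Z(G₂)` be the pushout, presented by the maps
`j₁ : G₁ → G₃` and `j₂ : Z(G₂) → G₃` with commuting images, joint surjectivity, and
kernel the antidiagonal copy of `Z(G)`. Then `j₁` is injective with cokernel `G₂/G` and
is a pseudo-z-embedding; likewise `g₂ = g·z₂ ↦ (g, z₂)` is a well-defined injective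
homomorphism `G₂ → G₃` with cokernel `G₁/G` and is a pseudo-z-embedding. -/
theorem pushout_of_two_pseudoZEmb
    {Γ G G₁ G₂ G₃ : Type} [Group Γ] [Group G] [Group G₁] [Group G₂] [Group G₃]
    [MulDistribMulAction Γ G] [MulDistribMulAction Γ G₁] [MulDistribMulAction Γ G₂]
    [MulDistribMulAction Γ G₃]
    (P₁ : PseudoZEmb Γ G G₁) (P₂ : PseudoZEmb Γ G G₂)
    -- over `F̄` one has `G₂ = G · Z(G₂)`
    (hG₂gen : ∀ g₂ : G₂, ∃ (g : G) (z : ↥(Subgroup.center G₂)), g₂ = P₂.ι g * ↑z)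
    -- pushout data for `G₃ = (G₁ × Z(G₂)) / {(z, z⁻¹) : z ∈ Z(G)}`
    (j₁ : G₁ →* G₃) (j₂ : ↥(Subgroup.center G₂) →* G₃)
    (hj₁_equiv : ∀ (σ : Γ) (g : G₁), j₁ (σ • g) = σ • j₁ g)
    (hj₂_equiv : ∀ (σ : Γ) (z : ↥(Subgroup.center G₂)),
      j₂ ⟨σ • (z : G₂), smul_center_mem σ z.2⟩ = σ • j₂ z)
    (hcomm : ∀ (g : G₁) (z : ↥(Subgroup.center G₂)), j₁ g * j₂ z = j₂ z * j₁ g)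
    (hsurj : ∀ x : G₃, ∃ (g : G₁) (z : ↥(Subgroup.center G₂)), x = j₁ g * j₂ z)
    (hker : ∀ (g : G₁) (z : ↥(Subgroup.center G₂)),
      j₁ g * j₂ z = 1 ↔
        ∃ w : G, w ∈ Subgroup.center G ∧ P₁.ι w = g ∧ P₂.ι w = (↑z)⁻¹) :
    -- `j₁ : G₁ → G₃` is injective
    Function.Injective j₁ ∧
    -- the cokernel of `j₁` is `G₂/G`
    (∃ q : G₃ →* P₂.C, Function.Surjective q ∧
      (∀ x : G₃, q x = 1 ↔ ∃ g : G₁, j₁ g = x) ∧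
      (∀ (σ : Γ) (x : G₃), q (σ • x) = σ • q x) ∧
      (∀ z : ↥(Subgroup.center G₂), q (j₂ z) = P₂.π ↑z)) ∧
    -- `G₁ → G₃` is a pseudo-z-embedding
    (∃ R₁ : PseudoZEmb Γ G₁ G₃, R₁.ι = j₁) ∧
    -- `G₂ → G₃`, `g·z₂ ↦ (g, z₂)`, is a well-defined injective homomorphism and a
    -- pseudo-z-embedding, with cokernel `G₁/G`
    (∃ κ : G₂ →* G₃,
      (∀ (g : G) (z : ↥(Subgroup.center G₂)), κ (P₂.ι g * ↑z) = j₁ (P₁.ι g) * j₂ z) ∧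
      Function.Injective κ ∧
      (∃ q' : G₃ →* P₁.C, Function.Surjective q' ∧
        (∀ x : G₃, q' x = 1 ↔ ∃ g : G₂, κ g = x)) ∧
      ∃ R₂ : PseudoZEmb Γ G₂ G₃, R₂.ι = κ) := by
  classical
  have hj₁inj : Function.Injective j₁ := j₁_inj P₁ P₂ j₁ j₂ hker
  -- the quotient map `q : G₃ → C₂ = G₂/G`
  obtain ⟨q, hq0⟩ := pushout_hom P₁ P₂ j₁ j₂ hcomm hsurj hker 1
    (P₂.π.comp (Subgroup.center G₂).subtype)
    (fun w hw h2 => by simpa using ((P₂.ker_eq _).mpr ⟨w, rfl⟩).symm)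
  have hq : ∀ (g : G₁) (z : ↥(Subgroup.center G₂)), q (j₁ g * j₂ z) = P₂.π ↑z := by
    intro g z
    simpa using hq0 g z
  -- the quotient map `q' : G₃ → C₁ = G₁/G`
  obtain ⟨q', hq'0⟩ := pushout_hom P₁ P₂ j₁ j₂ hcomm hsurj hker P₁.π 1
    (fun w hw h2 => by simpa using (P₁.ker_eq _).mpr ⟨w, rfl⟩)
  have hq' : ∀ (g : G₁) (z : ↥(Subgroup.center G₂)), q' (j₁ g * j₂ z) = P₁.π g := by
    intro g z
    simpa using hq'0 g z
  -- `κ : G₂ → G₃`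
  obtain ⟨κ, hκ⟩ := kappa_exists P₁ P₂ j₁ j₂ hG₂gen hcomm hker
  have hκcent : ∀ (g₂ : G₂) (h : g₂ ∈ Subgroup.center G₂), κ g₂ = j₂ ⟨g₂, h⟩ := by
    intro g₂ h
    simpa using hκ 1 ⟨g₂, h⟩
  have hqj₁ : ∀ g : G₁, q (j₁ g) = 1 := by
    intro g
    have := hq g 1
    simpa using this
  have hq'j₁ : ∀ g : G₁, q' (j₁ g) = P₁.π g := by
    intro g
    have := hq' g 1
    simpa using this
  have hqj₂ : ∀ z : ↥(Subgroup.center G₂), q (j₂ z) = P₂.π ↑z := by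
    intro z
    have := hq 1 z
    simpa using this
  -- equivariance of q
  have hqequiv : ∀ (σ : Γ) (x : G₃), q (σ • x) = σ • q x := by
    intro σ x
    obtain ⟨g, z, rfl⟩ := hsurj x
    rw [smul_decomp j₁ j₂ hj₁_equiv hj₂_equiv, hq, hq]
    exact P₂.π_equiv σ ↑z
  have hq'equiv : ∀ (σ : Γ) (x : G₃), q' (σ • x) = σ • q' x := by
    intro σ x
    obtain ⟨g, z, rfl⟩ := hsurj x
    rw [smul_decomp j₁ j₂ hj₁_equiv hj₂_equiv, hq', hq']
    exact P₁.π_equiv σ g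
  -- surjectivity of q
  have hqsurj : Function.Surjective q := by
    intro c
    obtain ⟨y, rfl⟩ := P₂.π_surj c
    obtain ⟨g, z, rfl⟩ := hG₂gen y
    refine ⟨j₂ z, ?_⟩
    rw [hqj₂, map_mul, (P₂.ker_eq _).mpr ⟨g, rfl⟩, one_mul]
  have hq'surj : Function.Surjective q' := by
    intro c
    obtain ⟨y, rfl⟩ := P₁.π_surj c
    exact ⟨j₁ y, hq'j₁ y⟩
  -- kernel of q
  have hqker : ∀ x : G₃, q x = 1 ↔ ∃ g : G₁, j₁ g = x := by
    intro x
    constructor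
    · intro hx
      obtain ⟨g, z, rfl⟩ := hsurj x
      rw [hq] at hx
      obtain ⟨h, hh⟩ := (P₂.ker_eq _).mp hx
      have h2 : P₂.ι h ∈ Subgroup.center G₂ := by rw [hh]; exact z.2
      have hZ : h ∈ Subgroup.center G := center_of_ι₂ P₂ h h2
      have : j₂ z = j₁ (P₁.ι h) := by
        rw [j₁_ι₁_eq_j₂_ι₂ P₁ P₂ j₁ j₂ hker h hZ h2]
        congr 1
        exact Subtype.ext hh.symm
      exact ⟨g * P₁.ι h, by rw [map_mul, this]⟩
    · rintro ⟨g, rfl⟩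
      exact hqj₁ g
  -- injectivity of κ
  have hκinj : Function.Injective κ := by
    rw [injective_iff_map_eq_one]
    intro g₂ hg₂
    obtain ⟨g, z, rfl⟩ := hG₂gen g₂
    rw [hκ] at hg₂
    obtain ⟨w, hwZ, hw1, hw2⟩ := (hker _ _).mp hg₂
    have hwg : w = g := P₁.ι_inj hw1
    rw [hwg] at hw2
    rw [hw2]
    simp
  -- kernel of q' is the image of κ
  have hq'ker : ∀ x : G₃, q' x = 1 ↔ ∃ g₂ : G₂, κ g₂ = x := by
    intro x
    constructor
    · intro hx
      obtain ⟨g, z, rfl⟩ := hsurj x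
      rw [hq'] at hx
      obtain ⟨h, hh⟩ := (P₁.ker_eq _).mp hx
      exact ⟨P₂.ι h * ↑z, by rw [hκ, hh]⟩
    · rintro ⟨g₂, rfl⟩
      obtain ⟨g, z, rfl⟩ := hG₂gen g₂
      rw [hκ, hq']
      exact (P₁.ker_eq _).mpr ⟨g, rfl⟩
  -- equivariance of κ
  have hκequiv : ∀ (σ : Γ) (g₂ : G₂), κ (σ • g₂) = σ • κ g₂ := by
    intro σ g₂
    obtain ⟨g, z, rfl⟩ := hG₂gen g₂
    have h1 : σ • (P₂.ι g * ↑z) =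
        P₂.ι (σ • g) * ↑(⟨σ • (z : G₂), smul_center_mem σ z.2⟩ : ↥(Subgroup.center G₂)) := by
      rw [smul_mul', P₂.ι_equiv]
    rw [h1, hκ, hκ, P₁.ι_equiv, hj₁_equiv, hj₂_equiv, smul_mul']
  -- κ sends the center of G₂ into the center of G₃
  have hκcenter : ∀ g₂ : G₂, g₂ ∈ Subgroup.center G₂ → κ g₂ ∈ Subgroup.center G₃ := by
    intro g₂ h
    rw [hκcent g₂ h]
    exact j₂_central j₁ j₂ hcomm hsurj _
  -- H¹(Z(G₁)) → H¹(Z(G₃)) is injective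
  have hR₁inj : ∀ c c' : Γ → G₁,
      (∀ σ : Γ, c σ ∈ Subgroup.center G₁) → (∀ σ : Γ, c' σ ∈ Subgroup.center G₁) →
      (∀ σ τ : Γ, c (σ * τ) = c σ * σ • c τ) →
      (∀ σ τ : Γ, c' (σ * τ) = c' σ * σ • c' τ) →
      (∃ x ∈ Subgroup.center G₃, ∀ σ : Γ, j₁ (c' σ) = j₁ (c σ) * (x⁻¹ * σ • x)) →
      ∃ z ∈ Subgroup.center G₁, ∀ σ : Γ, c' σ = c σ * (z⁻¹ * σ • z) := by

    rintro c c' hc hc' hcoc hcoc' ⟨x, hx, hX⟩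
    obtain ⟨a, ha, b, rfl⟩ := center_decomp j₁ j₂ hj₁inj hcomm hsurj x hx
    have hex : ∀ σ : Γ, ∃ w : G, w ∈ Subgroup.center G ∧
        P₁.ι w = (c σ * (a⁻¹ * σ • a))⁻¹ * c' σ ∧
        P₂.ι w = (↑((b⁻¹ * ⟨σ • (b : G₂), smul_center_mem σ b.2⟩)⁻¹ :
          ↥(Subgroup.center G₂)) : G₂)⁻¹ := by
      intro σ
      apply (hker _ _).mp
      have h1 : j₁ (c' σ) = j₁ (c σ * (a⁻¹ * σ • a)) *
          j₂ (b⁻¹ * ⟨σ • (b : G₂), smul_center_mem σ b.2⟩) := by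
        rw [hX σ, cobound_decomp j₁ j₂ hcomm hsurj hj₁_equiv hj₂_equiv σ a b,
          ← mul_assoc, ← j₁.map_mul]
      rw [j₁.map_mul, j₁.map_inv, j₂.map_inv, h1]
      group
    choose w hwZ hw1 hw2 using hex
    have hYcent : ∀ σ : Γ, a⁻¹ * σ • a ∈ Subgroup.center G₁ := fun σ =>
      mul_mem (inv_mem ha) (smul_center_mem σ ha)
    have hi1w : ∀ σ : Γ, P₁.ι (w σ) = (a⁻¹ * σ • a)⁻¹ * ((c σ)⁻¹ * c' σ) := by
      intro σ
      rw [hw1 σ, mul_inv_rev, mul_assoc]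
    have hwcoc : ∀ σ τ : Γ, w (σ * τ) = w σ * σ • w τ := by
      have h3 : IsCocycle (fun σ : Γ => (a⁻¹ * σ • a)⁻¹ * ((c σ)⁻¹ * c' σ)) :=
        IsCocycle.mul ((isCocycle_coboundary a).inv hYcent)
          (IsCocycle.mul (IsCocycle.inv (c := c) hcoc hc) hcoc' hc')
          (fun σ => mul_mem (inv_mem (hc σ)) (hc' σ))
      have h2 : IsCocycle (fun σ => P₁.ι (w σ)) := by
        intro σ τ
        simp only [hi1w]
        exact h3 σ τ
      exact h2.comap P₁.ι P₁.ι_inj P₁.ι_equiv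
    have hw2' : ∀ σ : Γ, P₂.ι (w σ) = P₂.ι 1 * ((↑b : G₂)⁻¹ * σ • (↑b : G₂)) := by
      intro σ
      rw [hw2 σ]
      simp
    obtain ⟨u, huZ, hu⟩ := P₂.h1Z_inj (fun _ => 1) w (fun _ => Subgroup.one_mem _)
      hwZ (by intro σ τ; simp) hwcoc ⟨(↑b : G₂), b.2, hw2'⟩
    refine ⟨P₁.ι u * a, mul_mem (P₁.center_map u huZ) ha, ?_⟩
    intro σ
    have hw1' : c' σ = c σ * (a⁻¹ * σ • a) * P₁.ι (w σ) := by
      rw [hw1 σ, mul_inv_cancel_left]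
    have hi1wσ : P₁.ι (w σ) = (P₁.ι u)⁻¹ * σ • (P₁.ι u) := by
      rw [hu σ, one_mul, map_mul, map_inv, P₁.ι_equiv]
    have hXc : (P₁.ι u)⁻¹ * σ • (P₁.ι u) ∈ Subgroup.center G₁ :=
      mul_mem (inv_mem (P₁.center_map u huZ)) (smul_center_mem σ (P₁.center_map u huZ))
    have hswap : (a⁻¹ * σ • a) * ((P₁.ι u)⁻¹ * σ • (P₁.ι u)) =
        ((P₁.ι u)⁻¹ * σ • (P₁.ι u)) * (a⁻¹ * σ • a) :=
      Subgroup.mem_center_iff.mp hXc _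
    rw [coboundary_mul (P₁.ι u) a (P₁.center_map u huZ) σ, hw1', hi1wσ,
      mul_assoc, hswap]
  -- every central cocycle of G₃ comes from a central cocycle of G₁
  have key_surj : ∀ d : Γ → G₃, (∀ σ : Γ, d σ ∈ Subgroup.center G₃) →
      (∀ σ τ : Γ, d (σ * τ) = d σ * σ • d τ) →
      ∃ a : Γ → G₁, (∀ σ : Γ, a σ ∈ Subgroup.center G₁) ∧
        (∀ σ τ : Γ, a (σ * τ) = a σ * σ • a τ) ∧
        ∃ x ∈ Subgroup.center G₃, ∀ σ : Γ, d σ = j₁ (a σ) * (x⁻¹ * σ • x) := by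

    intro d hd hdcoc
    have hdcoc' : IsCocycle d := hdcoc
    have hbeta : ∀ σ τ : Γ, q (d (σ * τ)) = q (d σ) * σ • q (d τ) :=
      hdcoc'.map q hqequiv
    obtain ⟨e, he⟩ := P₂.h1C (fun σ => q (d σ)) hbeta
    obtain ⟨y, hy⟩ := P₂.π_surj e
    obtain ⟨g0, z0, hy0⟩ := hG₂gen y
    have hez : e = P₂.π ↑z0 := by
      rw [← hy, hy0, map_mul, (P₂.ker_eq _).mpr ⟨g0, rfl⟩, one_mul]
    have hxc : j₂ z0 ∈ Subgroup.center G₃ := j₂_central j₁ j₂ hcomm hsurj z0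
    have hqx : q (j₂ z0) = e := by rw [hqj₂, hez]
    have hcent : ∀ σ : Γ, (j₂ z0)⁻¹ * σ • (j₂ z0) ∈ Subgroup.center G₃ := fun σ =>
      mul_mem (inv_mem hxc) (smul_center_mem σ hxc)
    have hkerd : ∀ σ : Γ, q (d σ * ((j₂ z0)⁻¹ * σ • (j₂ z0))⁻¹) = 1 := by
      intro σ
      have heσ : q (d σ) = e⁻¹ * σ • e := he σ
      simp only [map_mul, map_inv, hqequiv, hqx, heσ]
      group
    have hlift : ∀ σ : Γ, ∃ g : G₁, j₁ g = d σ * ((j₂ z0)⁻¹ * σ • (j₂ z0))⁻¹ :=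
      fun σ => (hqker _).mp (hkerd σ)
    choose a hA using hlift
    refine ⟨a, ?_, ?_, j₂ z0, hxc, ?_⟩
    · intro σ
      apply j₁_center_reflect j₁ hj₁inj
      rw [hA σ]
      exact mul_mem (hd σ) (inv_mem (hcent σ))
    · have h3 : IsCocycle (fun σ : Γ => d σ * ((j₂ z0)⁻¹ * σ • (j₂ z0))⁻¹) :=
        hdcoc'.mul ((isCocycle_coboundary (j₂ z0)).inv hcent)
          (fun σ => inv_mem (hcent σ))
      have h2 : IsCocycle (fun σ => j₁ (a σ)) := by
        intro σ τ
        simp only [hA]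
        exact h3 σ τ
      exact h2.comap j₁ hj₁inj hj₁_equiv
    · intro σ
      rw [hA σ]
      group
  -- H¹(Z(G₂)) → H¹(Z(G₃)) is injective
  have hR₂inj : ∀ c c' : Γ → G₂,
      (∀ σ : Γ, c σ ∈ Subgroup.center G₂) → (∀ σ : Γ, c' σ ∈ Subgroup.center G₂) →
      (∀ σ τ : Γ, c (σ * τ) = c σ * σ • c τ) →
      (∀ σ τ : Γ, c' (σ * τ) = c' σ * σ • c' τ) →
      (∃ x ∈ Subgroup.center G₃, ∀ σ : Γ, κ (c' σ) = κ (c σ) * (x⁻¹ * σ • x)) →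
      ∃ z ∈ Subgroup.center G₂, ∀ σ : Γ, c' σ = c σ * (z⁻¹ * σ • z) := by

    rintro c c' hc hc' hcoc hcoc' ⟨x, hx, hX⟩
    obtain ⟨a, ha, b, rfl⟩ := center_decomp j₁ j₂ hj₁inj hcomm hsurj x hx
    have hX' : ∀ σ : Γ, j₂ ⟨c' σ, hc' σ⟩ = j₂ ⟨c σ, hc σ⟩ *
        (j₁ (a⁻¹ * σ • a) * j₂ (b⁻¹ * ⟨σ • (b : G₂), smul_center_mem σ b.2⟩)) := by
      intro σ
      have h0 := hX σ
      rw [cobound_decomp j₁ j₂ hcomm hsurj hj₁_equiv hj₂_equiv σ a b,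
        hκcent (c' σ) (hc' σ), hκcent (c σ) (hc σ)] at h0
      exact h0
    have hex : ∀ σ : Γ, ∃ w : G, w ∈ Subgroup.center G ∧
        P₁.ι w = a⁻¹ * σ • a ∧
        P₂.ι w = (↑((⟨c σ, hc σ⟩ : ↥(Subgroup.center G₂)) *
          (b⁻¹ * ⟨σ • (b : G₂), smul_center_mem σ b.2⟩) *
          (⟨c' σ, hc' σ⟩ : ↥(Subgroup.center G₂))⁻¹) : G₂)⁻¹ := by
      intro σ
      apply (hker _ _).mp
      rw [j₂.map_mul, j₂.map_mul, j₂.map_inv, ← mul_assoc, ← mul_assoc, hcomm,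
        mul_assoc (j₂ ⟨c σ, hc σ⟩), ← hX' σ]
      group
    choose w hwZ hw1 hw2 using hex
    have hc'eq : ∀ σ : Γ, c' σ = P₂.ι (w σ) * (c σ * ((↑b : G₂)⁻¹ * σ • (↑b : G₂))) := by
      intro σ
      have h2 := hw2 σ
      push_cast at h2
      rw [h2]
      group
    have hwcoc : ∀ σ τ : Γ, w (σ * τ) = w σ * σ • w τ := by
      have h2 : IsCocycle (fun σ => P₁.ι (w σ)) := by
        intro σ τ
        simp only [hw1]
        exact isCocycle_coboundary a σ τ
      exact h2.comap P₁.ι P₁.ι_inj P₁.ι_equiv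
    obtain ⟨u, huZ, hu⟩ := P₁.h1Z_inj (fun _ => 1) w (fun _ => Subgroup.one_mem _)
      hwZ (by intro σ τ; simp) hwcoc
      ⟨a, ha, fun σ => by rw [hw1 σ]; simp⟩
    refine ⟨P₂.ι u * (↑b : G₂), mul_mem (P₂.center_map u huZ) b.2, ?_⟩
    intro σ
    have hi2wσ : P₂.ι (w σ) = (P₂.ι u)⁻¹ * σ • (P₂.ι u) := by
      rw [hu σ, one_mul, map_mul, map_inv, P₂.ι_equiv]
    have hXc : (P₂.ι u)⁻¹ * σ • (P₂.ι u) ∈ Subgroup.center G₂ :=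
      mul_mem (inv_mem (P₂.center_map u huZ)) (smul_center_mem σ (P₂.center_map u huZ))
    have hswap : c σ * ((P₂.ι u)⁻¹ * σ • (P₂.ι u)) =
        ((P₂.ι u)⁻¹ * σ • (P₂.ι u)) * c σ :=
      Subgroup.mem_center_iff.mp hXc (c σ)
    rw [coboundary_mul (P₂.ι u) (↑b : G₂) (P₂.center_map u huZ) σ]
    calc c' σ = ((P₂.ι u)⁻¹ * σ • (P₂.ι u)) * (c σ * ((↑b : G₂)⁻¹ * σ • (↑b : G₂))) := by
          rw [hc'eq σ, hi2wσ]
      _ = c σ * (((P₂.ι u)⁻¹ * σ • (P₂.ι u)) * ((↑b : G₂)⁻¹ * σ • (↑b : G₂))) := by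
          rw [← mul_assoc, ← hswap, mul_assoc]
  -- H¹(Z(G₂)) → H¹(Z(G₃)) is surjective
  have hR₂surj : ∀ d : Γ → G₃, (∀ σ : Γ, d σ ∈ Subgroup.center G₃) →
      (∀ σ τ : Γ, d (σ * τ) = d σ * σ • d τ) →
      ∃ c : Γ → G₂, (∀ σ : Γ, c σ ∈ Subgroup.center G₂) ∧
        (∀ σ τ : Γ, c (σ * τ) = c σ * σ • c τ) ∧
        ∃ x ∈ Subgroup.center G₃, ∀ σ : Γ, d σ = κ (c σ) * (x⁻¹ * σ • x) := by

    intro d hd hdcoc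
    obtain ⟨a, haC, hacoc, x, hx, hdx⟩ := key_surj d hd hdcoc
    obtain ⟨c, hcC, hccoc, y, hy, hay⟩ := P₁.h1Z_surj a haC hacoc
    have hyc : j₁ y ∈ Subgroup.center G₃ := j₁_center j₁ j₂ hcomm hsurj y hy
    refine ⟨fun σ => P₂.ι (c σ), fun σ => P₂.center_map _ (hcC σ), ?_,
      j₁ y * x, mul_mem hyc hx, ?_⟩
    · intro σ τ
      show P₂.ι (c (σ * τ)) = P₂.ι (c σ) * σ • P₂.ι (c τ)
      rw [hccoc σ τ, map_mul, P₂.ι_equiv]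
    · intro σ
      have hκc : κ (P₂.ι (c σ)) = j₁ (P₁.ι (c σ)) := by simpa using hκ (c σ) 1
      have h1' : j₁ (y⁻¹ * σ • y) = (j₁ y)⁻¹ * σ • (j₁ y) := by
        rw [map_mul, map_inv, hj₁_equiv]
      calc d σ = j₁ (a σ) * (x⁻¹ * σ • x) := hdx σ
        _ = j₁ (P₁.ι (c σ)) * (j₁ (y⁻¹ * σ • y) * (x⁻¹ * σ • x)) := by
            rw [hay σ, j₁.map_mul, mul_assoc]
        _ = κ (P₂.ι (c σ)) * (((j₁ y)⁻¹ * σ • (j₁ y)) * (x⁻¹ * σ • x)) := by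
            rw [hκc, ← h1']
        _ = κ (P₂.ι (c σ)) * ((j₁ y * x)⁻¹ * σ • (j₁ y * x)) := by
            rw [coboundary_mul (j₁ y) x hyc σ]
  refine ⟨hj₁inj, ⟨q, hqsurj, hqker, hqequiv, hqj₂⟩, ?_, ?_⟩
  · exact ⟨PseudoZEmb.mk P₂.C j₁ q hj₁inj hqsurj hqker hj₁_equiv hqequiv
      P₂.h1C (j₁_center j₁ j₂ hcomm hsurj) hR₁inj key_surj, rfl⟩
  · refine ⟨κ, hκ, hκinj, ⟨q', hq'surj, hq'ker⟩, ?_⟩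
    exact ⟨PseudoZEmb.mk P₁.C κ q' hκinj hq'surj hq'ker hκequiv hq'equiv
      P₁.h1C hκcenter hR₂inj hR₂surj, rfl⟩
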